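/- For a sequence x ∈ c₀, the rank sequence r_x(n) = #{k : |x(k)| > |x(n)|, or |x(k)| = |x(n)| and k ≤ n} is well-defined (finite for each n) and injective as a map ℕ → ℕ; moreover n ↦ |x|∘r_x^{-1} enumerates the decreasing rearrangement of |x|, i.e., r_x(n) is the position of |x(n)| in the decreasing rearrangement of |x|. -/
import Mathlib


open Filter

/-- The set whose cardinality is the rank `r_x(n)`: the indices `k` with
`|x k| > |x n|`, or `|x k| = |x n|` and `k ≤ n`. -/
def rankSet (x : ℕ → ℂ) (n : ℕ) : Set ℕ :=
  {k | ‖x k‖ > ‖x n‖ ∨ (‖x k‖ = ‖x n‖ ∧ k ≤ n)}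

/-- The rank sequence `r_x(n)`: the position of `|x n|` in the decreasing
rearrangement of `|x|`. -/
noncomputable def rankSeq (x : ℕ → ℂ) (n : ℕ) : ℕ := (rankSet x n).ncard

/-- for a (nowhere vanishing) null sequence `x ∈ c₀`, the rank
sequence `r_x` is well defined (each `rankSet` is finite) and injective;
moreover `|x| ∘ r_x⁻¹` enumerates the decreasing rearrangement of `|x|`:
`r_x` is monotone against `|x|` (`r_x m ≤ r_x n → |x n| ≤ |x m|`) and takes
every value `m ≥ 1`, so `r_x(n)` is exactly the position of `|x n|` in the
decreasing rearrangement of `|x|`. -/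
theorem statement10 (x : ℕ → ℂ)
    (hx0 : Tendsto x atTop (nhds 0)) (hxne : ∀ n, x n ≠ 0) :
    (∀ n, (rankSet x n).Finite) ∧
    Function.Injective (rankSeq x) ∧
    (∀ m n, rankSeq x m ≤ rankSeq x n → ‖x n‖ ≤ ‖x m‖) ∧
    (∀ m : ℕ, 1 ≤ m → ∃ n, rankSeq x n = m) := by
  have hpos : ∀ n, 0 < ‖x n‖ := fun n => norm_pos_iff.mpr (hxne n)
  have hnorm : Tendsto (fun n => ‖x n‖) atTop (nhds 0) := by
    simpa using hx0.norm
  have hmem : ∀ n, n ∈ rankSet x n := fun n => Or.inr ⟨rfl, le_rfl⟩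
  have hfin : ∀ n, (rankSet x n).Finite := by
    intro n
    obtain ⟨N, hN⟩ := Filter.eventually_atTop.mp
      (hnorm.eventually (gt_mem_nhds (hpos n)))
    apply Set.Finite.subset (Set.finite_Iio N)
    intro k hk
    simp only [Set.mem_Iio]
    by_contra hlt
    push_neg at hlt
    have := hN k hlt
    rcases hk with h | ⟨h, _⟩ <;> linarith
  have hsub_lt : ∀ m n, ‖x m‖ < ‖x n‖ → rankSet x n ⊂ rankSet x m := by
    intro m n h
    have hsub : rankSet x n ⊆ rankSet x m := by
      intro k hk
      rcases hk with hk | ⟨hk, _⟩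
      · exact Or.inl (lt_trans h hk)
      · exact Or.inl (hk ▸ h)
    refine (Set.ssubset_iff_of_subset hsub).mpr ⟨m, hmem m, ?_⟩
    intro hcon
    rcases hcon with hc | ⟨hc, _⟩ <;> linarith
  have key3 : ∀ m n, rankSeq x m ≤ rankSeq x n → ‖x n‖ ≤ ‖x m‖ := by
    intro m n h
    by_contra hcon
    push_neg at hcon
    have := Set.ncard_lt_ncard (hsub_lt m n hcon) (hfin m)
    exact absurd h (by simp only [rankSeq]; omega)
  have hsub_eq : ∀ m n, m < n → ‖x m‖ = ‖x n‖ → rankSet x m ⊂ rankSet x n := by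
    intro m n hmn he
    have hsub : rankSet x m ⊆ rankSet x n := by
      intro k hk
      rcases hk with hk | ⟨hk, hkm⟩
      · exact Or.inl (he ▸ hk)
      · exact Or.inr ⟨hk.trans he, hkm.trans hmn.le⟩
    refine (Set.ssubset_iff_of_subset hsub).mpr ⟨n, hmem n, ?_⟩
    intro hcon
    rcases hcon with hc | ⟨_, hc⟩
    · rw [he] at hc; exact lt_irrefl _ hc
    · omega
  have hinj : Function.Injective (rankSeq x) := by
    intro m n h
    have h1 : ‖x n‖ ≤ ‖x m‖ := key3 m n h.le
    have h2 : ‖x m‖ ≤ ‖x n‖ := key3 n m h.ge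
    have he : ‖x m‖ = ‖x n‖ := le_antisymm h2 h1
    rcases lt_trichotomy m n with hlt | heq | hgt
    · have := Set.ncard_lt_ncard (hsub_eq m n hlt he) (hfin n)
      exact absurd h (by simp only [rankSeq]; omega)
    · exact heq
    · have := Set.ncard_lt_ncard (hsub_eq n m hgt he.symm) (hfin m)
      exact absurd h (by simp only [rankSeq]; omega)
  have hle_of_mem : ∀ n k, k ∈ rankSet x n → rankSet x k ⊆ rankSet x n := by
    intro n k hk j hj
    rcases hj with hj | ⟨hj, hjk⟩
    · rcases hk with hk | ⟨hk, _⟩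
      · exact Or.inl (lt_trans hk hj)
      · exact Or.inl (hk ▸ hj)
    · rcases hk with hk | ⟨hk, hkn⟩
      · exact Or.inl (hj ▸ hk)
      · exact Or.inr ⟨hj.trans hk, hjk.trans hkn⟩
  have hpos1 : ∀ n, 1 ≤ rankSeq x n := fun n =>
    (Set.ncard_pos (hfin n)).mpr ⟨n, hmem n⟩
  have hub : ∀ m : ℕ, ∃ n, m ≤ rankSeq x n := by
    intro m
    have ht : Tendsto (rankSeq x) atTop atTop := by
      rw [← Nat.cofinite_eq_atTop]
      exact hinj.tendsto_cofinite
    exact (ht.eventually_ge_atTop m).exists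
  refine ⟨hfin, hinj, key3, ?_⟩
  intro m hm
  obtain ⟨n, hn⟩ := hub m
  have hcard : ((hfin n).toFinset).card = rankSeq x n :=
    (Set.ncard_eq_toFinset_card _ (hfin n)).symm
  have himg : ((hfin n).toFinset).image (rankSeq x) = Finset.Icc 1 (rankSeq x n) := by
    apply Finset.eq_of_subset_of_card_le
    · intro j hj
      obtain ⟨k, hk, rfl⟩ := Finset.mem_image.mp hj
      have hk' : k ∈ rankSet x n := (Set.Finite.mem_toFinset _).mp hk
      refine Finset.mem_Icc.mpr ⟨hpos1 k, ?_⟩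
      exact Set.ncard_le_ncard (hle_of_mem n k hk') (hfin n)
    · rw [Finset.card_image_of_injective _ hinj, hcard, Nat.card_Icc]
      omega
  have hmmem : m ∈ Finset.Icc 1 (rankSeq x n) := Finset.mem_Icc.mpr ⟨hm, hn⟩
  rw [← himg] at hmmem
  obtain ⟨n', _, hn'⟩ := Finset.mem_image.mp hmmem
  exact ⟨n', hn'⟩
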